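/- Let 𝔫 be an ideal of 𝒪 and η ∈ 𝒪 nonzero and coprime to 𝔫. Let Σ_M u_M M ∈ R[M₂(𝒪)_η] be such that for every coset C ∈ M₂(𝒪)_η/SL₂(𝒪), Σ_{M∈C} u_M([M∞] − [M0]) = [∞] − [0] in R[P¹(K)]. Then for any P[u,v] ∈ R_{k−2}[X,Y][E_𝔫], T_{Δ_η}([P,(u,v)]) = Σ_M u_M [P(aX+bY, cX+dY), (au+cv, bu+dv)], where M = (a b; c d) runs over those matrices with (au+cv, bu+dv) ∈ E_𝔫. -/

import Mathlib

open scoped MatrixGroups LinearAlgebra.Projectivization Classical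
open Matrix MvPolynomial NumberField

set_option maxHeartbeats 1000000
set_option synthInstance.maxHeartbeats 200000

noncomputable section

namespace Bianchi

/-- `K` is (isomorphic to) the imaginary quadratic field `ℚ(√-d)` for some
`d ∈ {1,2,3,7,11}`, i.e. a Euclidean imaginary quadratic field. -/
def IsEuclideanImagQuad (K : Type) [Field K] [NumberField K] : Prop :=
  ∃ d : ℕ, d ∈ ({1, 2, 3, 7, 11} : Set ℕ) ∧
    ∃ α : K, α ^ 2 = -(d : K) ∧ Algebra.adjoin ℚ {α} = ⊤

variable (K : Type) [Field K] [NumberField K]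

/-- 2×2 matrices with entries in `A`. -/
abbrev Mat2 (A : Type*) := Matrix (Fin 2) (Fin 2) A

/-- The map on matrices induced by the inclusion `𝓞 K → K`. -/
def ιm : Mat2 (𝓞 K) → Mat2 K := fun M => M.map (algebraMap (𝓞 K) K)

/-- The projective line `P¹(K)`, whose points are the cusps. -/
abbrev P1 := ℙ K (Fin 2 → K)

/-- Action of a nonsingular `K`-matrix on `P¹(K)` (acting on column vectors);
junk value (the identity) for singular matrices. -/
def mAct (A : Mat2 K) : P1 K → P1 K :=
  if h : Function.Injective (Matrix.toLin' A) then
    Projectivization.map (Matrix.toLin' A) h else id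

/-- The cusp `0 = 0/1 = [0 : 1]`. -/
def c0 : P1 K := Projectivization.mk K ![0, 1]
  (by intro h; have := congrFun h 1; simp at this)

/-- The cusp `∞ = 1/0 = [1 : 0]`. -/
def cInf : P1 K := Projectivization.mk K ![1, 0]
  (by intro h; have := congrFun h 0; simp at this)

variable (R : Type) [CommRing R] [Algebra (𝓞 K) R] (k : ℕ)

/-- `R_{k-2}[X,Y]`, the space of homogeneous polynomials of degree `k - 2` in two
variables `X, Y` over `R`, presented by the coefficient vectors with respect to the
monomial basis `X^i Y^(k-2-i)`, `0 ≤ i ≤ k-2`. -/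
abbrev Poly := Fin (k - 1) → R

/-- The exponent function of the `i`-th basis monomial `X^i Y^(k-2-i)` of `R_{k-2}[X,Y]`. -/
def expo (i : Fin (k - 1)) : Fin 2 →₀ ℕ :=
  Finsupp.single 0 (i : ℕ) + Finsupp.single 1 (k - 2 - (i : ℕ))

/-- Interpret a coefficient vector as the homogeneous polynomial
`∑ i, P i • X^i Y^(k-2-i)`. -/
def toPoly : Poly R k →ₗ[R] MvPolynomial (Fin 2) R :=
  ∑ i : Fin (k - 1), (monomial (expo k i)).comp (LinearMap.proj i)

/-- Extract the coefficient vector of a homogeneous polynomial of degree `k-2`. -/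
def ofPoly : MvPolynomial (Fin 2) R →ₗ[R] Poly R k :=
  LinearMap.pi (fun i => lcoeff R (expo k i))

/-- The pair of degree-one forms `(dX - bY, -cX + aY)` attached to `g = (a b; c d)`. -/
def substVec (g : Mat2 (𝓞 K)) : Fin 2 → MvPolynomial (Fin 2) R :=
  ![C (algebraMap (𝓞 K) R (g 1 1)) * X 0 - C (algebraMap (𝓞 K) R (g 0 1)) * X 1,
    -(C (algebraMap (𝓞 K) R (g 1 0)) * X 0) + C (algebraMap (𝓞 K) R (g 0 0)) * X 1]

/-- The substitution `P(X,Y) ↦ P(dX - bY, -cX + aY)` for `g = (a b; c d)`. -/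
def substMat (g : Mat2 (𝓞 K)) : MvPolynomial (Fin 2) R →ₐ[R] MvPolynomial (Fin 2) R :=
  aeval (substVec K R g)

/-- The right action `P ↦ P|_g = P(dX - bY, -cX + aY)` of a matrix `g` over `𝓞 K`
on `R_{k-2}[X,Y]` (substitution preserves homogeneity, so this is computed by
passing to polynomials, substituting, and taking coefficients again). -/
def polyAct (g : Mat2 (𝓞 K)) : Poly R k →ₗ[R] Poly R k :=
  (ofPoly R k) ∘ₗ (substMat K R g).toLinearMap ∘ₗ (toPoly R k)

/-- Evaluation `P(x₀, x₁)` of `P ∈ R_{k-2}[X,Y]` at a pair of elements of `R`. -/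
def pevalR (P : Poly R k) (x : Fin 2 → R) : R := MvPolynomial.eval x (toPoly R k P)

end Bianchi
namespace Bianchi

variable (K : Type) [Field K] [NumberField K]
variable (R : Type) [CommRing R] [Algebra (𝓞 K) R] (k : ℕ)
variable (Γ : Subgroup (SL(2, 𝓞 K)))

/-- The relations defining boundary modular symbols: `x|_γ = x` for `γ ∈ Γ`. -/
def bsRel : Submodule R (P1 K →₀ Poly R k) :=
  Submodule.span R {x | ∃ (γ : SL(2, 𝓞 K)) (_ : γ ∈ Γ) (α : P1 K) (P : Poly R k),
    x = Finsupp.single (mAct K (ιm K γ.1) α) (polyAct K R k γ.1 P) - Finsupp.single α P}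

/-- The boundary modular symbols `B_k(Γ)` of weight `k` and level `Γ`. -/
abbrev BS := (P1 K →₀ Poly R k) ⧸ bsRel K R k Γ

/-- The boundary modular symbol `P ⊗ {α}`. -/
def bsym (α : P1 K) (P : Poly R k) : BS K R k Γ :=
  Submodule.Quotient.mk (Finsupp.single α P)

/-- The free module underlying modular symbols. -/
abbrev MSfree := (P1 K × P1 K) →₀ Poly R k

/-- The relations defining modular symbols: `{α,α} = 0`,
`{α,β} + {β,γ} + {γ,α} = 0`, and `x|_γ = x` for `γ ∈ Γ`. -/
def msRel : Submodule R (MSfree K R k) :=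
  Submodule.span R
    ({x | ∃ (α : P1 K) (P : Poly R k), x = Finsupp.single (α, α) P} ∪
     {x | ∃ (α β γ : P1 K) (P : Poly R k),
        x = Finsupp.single (α, β) P + Finsupp.single (β, γ) P + Finsupp.single (γ, α) P} ∪
     {x | ∃ (γ : SL(2, 𝓞 K)) (_ : γ ∈ Γ) (α β : P1 K) (P : Poly R k),
        x = Finsupp.single (mAct K (ιm K γ.1) α, mAct K (ιm K γ.1) β) (polyAct K R k γ.1 P)
          - Finsupp.single (α, β) P})

/-- The modular symbols `M_k(Γ)` of weight `k` and level `Γ`. -/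
abbrev MS := MSfree K R k ⧸ msRel K R k Γ

/-- The modular symbol `P ⊗ {α, β}`. -/
def msym (α β : P1 K) (P : Poly R k) : MS K R k Γ :=
  Submodule.Quotient.mk (Finsupp.single (α, β) P)

/-- The boundary map on the free modules, `P ⊗ {α,β} ↦ P ⊗ {β} - P ⊗ {α}`. -/
def bdFree : MSfree K R k →ₗ[R] (P1 K →₀ Poly R k) :=
  Finsupp.lsum ℕ (fun p : P1 K × P1 K =>
    (Finsupp.lsingle p.2 - Finsupp.lsingle p.1 : Poly R k →ₗ[R] (P1 K →₀ Poly R k)))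

lemma bdFree_rel : msRel K R k Γ ≤ (bsRel K R k Γ).comap (bdFree K R k) := by
  rw [msRel, Submodule.span_le]
  rintro x ((⟨α, P, rfl⟩ | ⟨α, β, γ, P, rfl⟩) | ⟨γ, hγ, α, β, P, rfl⟩) <;>
    simp only [SetLike.mem_coe, Submodule.mem_comap, map_add, map_sub, bdFree,
      Finsupp.lsum_single, LinearMap.sub_apply, Finsupp.lsingle_apply]
  · simpa using (bsRel K R k Γ).zero_mem
  · have h0 : (Finsupp.single β P - Finsupp.single α P)
        + (Finsupp.single γ P - Finsupp.single β P)
        + (Finsupp.single α P - Finsupp.single γ P) = (0 : P1 K →₀ Poly R k) := by abel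
    rw [h0]
    exact (bsRel K R k Γ).zero_mem
  · have h1 : (Finsupp.single (mAct K (ιm K γ.1) β) (polyAct K R k γ.1 P)
        - Finsupp.single β P) ∈ bsRel K R k Γ :=
      Submodule.subset_span ⟨γ, hγ, β, P, rfl⟩
    have h2 : (Finsupp.single (mAct K (ιm K γ.1) α) (polyAct K R k γ.1 P)
        - Finsupp.single α P) ∈ bsRel K R k Γ :=
      Submodule.subset_span ⟨γ, hγ, α, P, rfl⟩
    have h3 := Submodule.sub_mem _ h1 h2
    convert h3 using 1
    abel

/-- The boundary map `∂ : M_k(Γ) → B_k(Γ)`. -/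
def bd : MS K R k Γ →ₗ[R] BS K R k Γ :=
  Submodule.mapQ _ _ (bdFree K R k) (bdFree_rel K R k Γ)

/-- The cuspidal modular symbols `𝒮_k(Γ) = ker ∂`. -/
def Scusp : Submodule R (MS K R k Γ) := LinearMap.ker (bd K R k Γ)

/-- The Manin symbol `[P, g] = P|_g ⊗ {g·0, g·∞}`, for an arbitrary matrix `g` over `𝓞`. -/
def maninSymM (P : Poly R k) (A : Mat2 (𝓞 K)) : MS K R k Γ :=
  msym K R k Γ (mAct K (ιm K A) (c0 K)) (mAct K (ιm K A) (cInf K)) (polyAct K R k A P)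

end Bianchi
namespace Bianchi

variable (K : Type) [Field K] [NumberField K]
variable (Γ : Subgroup (SL(2, 𝓞 K)))

/-- `F` is a (finite) system of representatives for the coset space `Γ\Δ`. -/
def IsRepSys (Δ : Set (Mat2 (𝓞 K))) (F : Finset (Mat2 (𝓞 K))) : Prop :=
  ↑F ⊆ Δ ∧ ∀ δ ∈ Δ, ∃! δ' : Mat2 (𝓞 K), δ' ∈ F ∧
    ∃ γ : SL(2, 𝓞 K), γ ∈ Γ ∧ δ = γ.1 * δ'

end Bianchi
namespace Bianchi

variable (K : Type) [Field K] [NumberField K]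

/-- The congruence subgroup `Γ₁(𝔫) = {(a b; c d) ∈ SL₂(𝓞) : c ≡ d - 1 ≡ 0 mod 𝔫}`. -/
def Gamma1 (n : Ideal (𝓞 K)) : Subgroup (SL(2, 𝓞 K)) where
  carrier := {g | g.1 1 0 ∈ n ∧ g.1 1 1 - 1 ∈ n}
  one_mem' := by
    constructor <;> simp
  mul_mem' := by
    rintro a b ⟨hc, hd⟩ ⟨hc', hd'⟩
    have hab : (a * b).1 = a.1 * b.1 := rfl
    have h10 : (a * b).1 1 0 = a.1 1 0 * b.1 0 0 + a.1 1 1 * b.1 1 0 := by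
      rw [hab, Matrix.mul_apply, Fin.sum_univ_two]
    have h11 : (a * b).1 1 1 = a.1 1 0 * b.1 0 1 + a.1 1 1 * b.1 1 1 := by
      rw [hab, Matrix.mul_apply, Fin.sum_univ_two]
    constructor
    · rw [h10]
      exact Ideal.add_mem n (Ideal.mul_mem_right _ n hc) (Ideal.mul_mem_left _ _ hc')
    · rw [h11]
      have : a.1 1 0 * b.1 0 1 + a.1 1 1 * b.1 1 1 - 1
          = a.1 1 0 * b.1 0 1 + ((a.1 1 1 - 1) * b.1 1 1 + (b.1 1 1 - 1)) := by ring
      rw [this]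
      exact Ideal.add_mem n (Ideal.mul_mem_right _ n hc)
        (Ideal.add_mem n (Ideal.mul_mem_right _ n hd) hd')
  inv_mem' := by
    rintro a ⟨hc, hd⟩
    have hinv : (a⁻¹).1 = (a.1).adjugate := Matrix.SpecialLinearGroup.coe_inv a
    have hadj : (a.1).adjugate = !![a.1 1 1, -a.1 0 1; -a.1 1 0, a.1 0 0] :=
      Matrix.adjugate_fin_two a.1
    have hdet : a.1 0 0 * a.1 1 1 - a.1 0 1 * a.1 1 0 = 1 := by
      have := a.2
      rwa [Matrix.det_fin_two] at this
    constructor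
    · show (a⁻¹).1 1 0 ∈ n
      rw [hinv, hadj]
      simpa using neg_mem hc
    · show (a⁻¹).1 1 1 - 1 ∈ n
      rw [hinv, hadj]
      have h00 : (!![a.1 1 1, -a.1 0 1; -a.1 1 0, a.1 0 0] : Mat2 (𝓞 K)) 1 1 = a.1 0 0 := by
        simp
      rw [h00]
      have hdd : a.1 0 0 * a.1 1 1 - 1 = a.1 0 1 * a.1 1 0 := by
        linear_combination hdet
      have h3 : a.1 0 0 - 1 = -(a.1 0 0 * (a.1 1 1 - 1)) + (a.1 0 0 * a.1 1 1 - 1) := by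
        ring
      rw [h3, hdd]
      exact add_mem (neg_mem (Ideal.mul_mem_left _ _ hd)) (Ideal.mul_mem_left _ _ hc)

/-- The set `Δ_η = {(a b; c d) ∈ Mat₂(𝓞) : ad - bc = η, c ≡ a - 1 ≡ 0 mod 𝔫}`. -/
def DeltaEta (n : Ideal (𝓞 K)) (η : 𝓞 K) : Set (Mat2 (𝓞 K)) :=
  {m | m.det = η ∧ m 1 0 ∈ n ∧ m 0 0 - 1 ∈ n}

/-- The bottom row `(c, d)` of a matrix, reduced mod `𝔫`; for `g ∈ SL₂(𝓞)` this is
`π(g) = (0,1)g ∈ E_𝔫`. -/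
def botPair (n : Ideal (𝓞 K)) (m : Mat2 (𝓞 K)) : (𝓞 K ⧸ n) × (𝓞 K ⧸ n) :=
  (Ideal.Quotient.mk n (m 1 0), Ideal.Quotient.mk n (m 1 1))

end Bianchi
namespace Bianchi

section AuxPoly

variable (K : Type) [Field K] [NumberField K]
variable (R : Type) [CommRing R] [Algebra (𝓞 K) R] (k : ℕ)

lemma degree_fin2 (d : Fin 2 →₀ ℕ) : d.degree = d 0 + d 1 := by
  rw [Finsupp.degree_apply, Finset.sum_subset (Finset.subset_univ d.support)
    (by intro i _ hi; simpa using Finsupp.notMem_support_iff.mp hi)]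
  simp [Fin.sum_univ_two]

lemma expo_apply0 (i : Fin (k - 1)) : expo k i 0 = (i : ℕ) := by
  simp [expo, Finsupp.single_apply]

lemma expo_apply1 (i : Fin (k - 1)) : expo k i 1 = k - 2 - (i : ℕ) := by
  simp [expo, Finsupp.single_apply]

lemma expo_degree (i : Fin (k - 1)) : (expo k i).degree = k - 2 := by
  have hi : (i : ℕ) < k - 1 := i.2
  rw [degree_fin2, expo_apply0, expo_apply1]
  omega

lemma toPoly_apply (P : Poly R k) :
    toPoly R k P = ∑ i : Fin (k - 1), monomial (expo k i) (P i) := by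
  simp [toPoly]

lemma ofPoly_apply (Q : MvPolynomial (Fin 2) R) (i : Fin (k - 1)) :
    ofPoly R k Q i = coeff (expo k i) Q := rfl

lemma toPoly_isHomogeneous (P : Poly R k) : (toPoly R k P).IsHomogeneous (k - 2) := by
  rw [toPoly_apply]
  exact MvPolynomial.IsHomogeneous.sum _ _ _
    (fun i _ => isHomogeneous_monomial _ (expo_degree k i))

lemma substVec_isHomogeneous (g : Mat2 (𝓞 K)) (i : Fin 2) :
    (substVec K R g i).IsHomogeneous 1 := by
  fin_cases i
  · exact (isHomogeneous_C_mul_X _ 0).sub (isHomogeneous_C_mul_X _ 1)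
  · exact ((isHomogeneous_C_mul_X _ 0).neg).add (isHomogeneous_C_mul_X _ 1)

lemma substMat_isHomogeneous (g : Mat2 (𝓞 K)) {Q : MvPolynomial (Fin 2) R} {m : ℕ}
    (hQ : Q.IsHomogeneous m) : (substMat K R g Q).IsHomogeneous m := by
  simpa [substMat] using hQ.aeval _ (substVec_isHomogeneous K R g)

lemma toPoly_ofPoly (hk : 2 ≤ k) {Q : MvPolynomial (Fin 2) R}
    (hQ : Q.IsHomogeneous (k - 2)) : toPoly R k (ofPoly R k Q) = Q := by
  rw [toPoly_apply]
  apply MvPolynomial.ext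
  intro d
  rw [MvPolynomial.coeff_sum]
  simp only [coeff_monomial, ofPoly_apply]
  by_cases hd : d.degree = k - 2
  · have hd0 : (d 0 : ℕ) < k - 1 := by rw [degree_fin2] at hd; omega
    have hde : expo k ⟨d 0, hd0⟩ = d := by
      ext j
      fin_cases j
      · show expo k ⟨d 0, hd0⟩ 0 = d 0
        rw [expo_apply0]
      · show expo k ⟨d 0, hd0⟩ 1 = d 1
        rw [expo_apply1]
        rw [degree_fin2] at hd
        have hv : ((⟨d 0, hd0⟩ : Fin (k - 1)) : ℕ) = d 0 := rfl
        rw [hv]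
        omega
    rw [Finset.sum_eq_single (⟨d 0, hd0⟩ : Fin (k - 1))]
    · rw [if_pos hde, hde]
    · intro i _ hi
      rw [if_neg]
      intro h
      apply hi
      have : expo k i 0 = d 0 := by rw [h]
      rw [expo_apply0] at this
      exact Fin.ext (by simpa using this)
    · intro h
      exact absurd (Finset.mem_univ _) h
  · rw [hQ.coeff_eq_zero hd]
    apply Finset.sum_eq_zero
    intro i _
    rw [if_neg]
    intro h
    exact hd (h ▸ expo_degree k i)

lemma substVec_mul (A B : Mat2 (𝓞 K)) :
    (fun i => aeval (substVec K R A) (substVec K R B i)) = substVec K R (A * B) := by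
  funext i
  fin_cases i <;>
    simp [substVec, Matrix.mul_apply, Fin.sum_univ_two, _root_.map_add, _root_.map_mul] <;>
    ring

lemma substMat_substMat (A B : Mat2 (𝓞 K)) (Q : MvPolynomial (Fin 2) R) :
    substMat K R A (substMat K R B Q) = substMat K R (A * B) Q := by
  rw [substMat, substMat, ← AlgHom.comp_apply, comp_aeval, substVec_mul]
  rfl

lemma polyAct_polyAct (hk : 2 ≤ k) (A B : Mat2 (𝓞 K)) (P : Poly R k) :
    polyAct K R k A (polyAct K R k B P) = polyAct K R k (A * B) P := by
  simp only [polyAct, LinearMap.comp_apply, AlgHom.toLinearMap_apply]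
  rw [toPoly_ofPoly R k hk
    (substMat_isHomogeneous K R B (toPoly_isHomogeneous R k P)),
    substMat_substMat]

end AuxPoly

end Bianchi

namespace Bianchi

section AuxAct

variable (K : Type) [Field K] [NumberField K]

lemma mk_eq_mk_of_eq {V : Type*} [AddCommGroup V] [Module K V] (v w : V) (hv : v ≠ 0)
    (hw : w ≠ 0) (h : v = w) : Projectivization.mk K v hv = Projectivization.mk K w hw := by
  subst h; rfl

lemma toLin'_inj {A : Mat2 K} (hA : A.det ≠ 0) : Function.Injective (Matrix.toLin' A) := by
  have h := Matrix.nonsing_inv_mul A (isUnit_iff_ne_zero.mpr hA)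
  intro x y hxy
  have h2 : Matrix.toLin' (A⁻¹ * A) x = Matrix.toLin' (A⁻¹ * A) y := by
    rw [Matrix.toLin'_mul]
    simp [hxy]
  rw [h, Matrix.toLin'_one] at h2
  simpa using h2

lemma mAct_mAct {A B : Mat2 K} (hA : A.det ≠ 0) (hB : B.det ≠ 0) (x : P1 K) :
    mAct K A (mAct K B x) = mAct K (A * B) x := by
  have hiA := toLin'_inj K hA
  have hiB := toLin'_inj K hB
  have hiAB : Function.Injective (Matrix.toLin' (A * B)) := by
    rw [Matrix.toLin'_mul]
    exact hiA.comp hiB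
  induction x using Projectivization.ind with
  | h v hv =>
    rw [mAct, mAct, mAct, dif_pos hiA, dif_pos hiB, dif_pos hiAB,
      Projectivization.map_mk, Projectivization.map_mk, Projectivization.map_mk]
    apply mk_eq_mk_of_eq
    rw [Matrix.toLin'_mul]
    rfl

lemma mAct_smul (c : K) (hc : c ≠ 0) {A : Mat2 K} (hA : A.det ≠ 0) (x : P1 K) :
    mAct K (c • A) x = mAct K A x := by
  have hiA := toLin'_inj K hA
  have hdet : (c • A).det ≠ 0 := by
    rw [Matrix.det_smul]
    simp [pow_ne_zero, hc, hA]
  have hiCA := toLin'_inj K hdet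
  induction x using Projectivization.ind with
  | h v hv =>
    rw [mAct, mAct, dif_pos hiA, dif_pos hiCA,
      Projectivization.map_mk, Projectivization.map_mk]
    rw [Projectivization.mk_eq_mk_iff]
    refine ⟨Units.mk0 c hc, ?_⟩
    have : Matrix.toLin' (c • A) = c • Matrix.toLin' A := by
      rw [_root_.map_smul]
    rw [this]
    rfl

lemma ιm_mul (A B : Mat2 (𝓞 K)) : ιm K (A * B) = ιm K A * ιm K B :=
  Matrix.map_mul

lemma det_ιm (M : Mat2 (𝓞 K)) : (ιm K M).det = algebraMap (𝓞 K) K M.det :=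
  ((algebraMap (𝓞 K) K).map_det M).symm

lemma det_ιm_ne {M : Mat2 (𝓞 K)} (h : M.det ≠ 0) : (ιm K M).det ≠ 0 := by
  rw [det_ιm]
  intro h0
  exact h (IsFractionRing.injective (𝓞 K) K (by simpa using h0))

lemma ιm_smul (c : 𝓞 K) (M : Mat2 (𝓞 K)) :
    ιm K (c • M) = (algebraMap (𝓞 K) K c) • ιm K M := by
  ext i j
  simp [ιm, Matrix.smul_apply, smul_eq_mul, _root_.map_mul]

end AuxAct

section AuxMS

variable (K : Type) [Field K] [NumberField K]
variable (R : Type) [CommRing R] [Algebra (𝓞 K) R] (k : ℕ)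
variable (Γ : Subgroup (SL(2, 𝓞 K)))

lemma msym_self (α : P1 K) (P : Poly R k) : msym K R k Γ α α P = 0 := by
  rw [msym, Submodule.Quotient.mk_eq_zero]
  exact Submodule.subset_span (Or.inl (Or.inl ⟨α, P, rfl⟩))

lemma msym_add3 (α β γp : P1 K) (P : Poly R k) :
    msym K R k Γ α β P + msym K R k Γ β γp P + msym K R k Γ γp α P = 0 := by
  have : msym K R k Γ α β P + msym K R k Γ β γp P + msym K R k Γ γp α P
      = (msRel K R k Γ).mkQ (Finsupp.single (α, β) P + Finsupp.single (β, γp) P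
        + Finsupp.single (γp, α) P) := by
    rw [map_add, map_add]
    rfl
  rw [this, Submodule.mkQ_apply, Submodule.Quotient.mk_eq_zero]
  exact Submodule.subset_span (Or.inl (Or.inr ⟨α, β, γp, P, rfl⟩))

lemma msym_rel {γ : SL(2, 𝓞 K)} (hγ : γ ∈ Γ) (α β : P1 K) (P : Poly R k) :
    msym K R k Γ (mAct K (ιm K γ.1) α) (mAct K (ιm K γ.1) β) (polyAct K R k γ.1 P)
      = msym K R k Γ α β P := by
  rw [msym, msym, Submodule.Quotient.eq]
  exact Submodule.subset_span (Or.inr ⟨γ, hγ, α, β, P, rfl⟩)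

lemma msym_sub (b α β : P1 K) (P : Poly R k) :
    msym K R k Γ α β P = msym K R k Γ b β P - msym K R k Γ b α P := by
  have h2 := msym_add3 K R k Γ b β b P
  rw [msym_self K R k Γ b P, add_zero] at h2
  have hβb : msym K R k Γ β b P = -msym K R k Γ b β P :=
    eq_neg_of_add_eq_zero_right h2
  have h1 := msym_add3 K R k Γ α β b P
  rw [add_assoc] at h1
  have := eq_neg_of_add_eq_zero_left h1
  rw [this, hβb]
  abel

end AuxMS

end Bianchi

namespace Bianchi

section AuxArith

variable (K : Type) [Field K] [NumberField K]
variable (n : Ideal (𝓞 K))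

lemma mem_Gamma1_iff (γ : SL(2, 𝓞 K)) :
    γ ∈ Gamma1 K n ↔ γ.1 1 0 ∈ n ∧ γ.1 1 1 - 1 ∈ n := Iff.rfl

lemma eta_cancel {η : 𝓞 K} (hcop : Ideal.span {η} ⊔ n = ⊤) {a : 𝓞 K}
    (h : η * a ∈ n) : a ∈ n := by
  have h1 : (1 : 𝓞 K) ∈ Ideal.span {η} ⊔ n := by rw [hcop]; trivial
  obtain ⟨x, hx, m, hm, hxm⟩ := Submodule.mem_sup.mp h1
  obtain ⟨c, rfl⟩ := Ideal.mem_span_singleton'.mp hx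
  have ha2 : a = c * (η * a) + a * m := by
    calc a = a * (c * η + m) := by rw [hxm, mul_one]
    _ = c * (η * a) + a * m := by ring
  rw [ha2]
  exact Ideal.add_mem n (Ideal.mul_mem_left n c h) (Ideal.mul_mem_left n a hm)

lemma adj2 (A : Mat2 (𝓞 K)) : A.adjugate.adjugate = A := by
  rw [Matrix.adjugate_adjugate A (by simp)]
  simp

lemma delta_d {η : 𝓞 K} {δ : Mat2 (𝓞 K)} (hδ : δ ∈ DeltaEta K n η) :
    δ 1 1 - η ∈ n := by
  obtain ⟨hdet, hc, ha⟩ := hδ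
  rw [Matrix.det_fin_two] at hdet
  have h : δ 1 1 - η = -((δ 0 0 - 1) * δ 1 1) + δ 0 1 * δ 1 0 := by
    linear_combination hdet
  rw [h]
  exact Ideal.add_mem n (neg_mem (Ideal.mul_mem_right _ n ha)) (Ideal.mul_mem_left n _ hc)

lemma botPair_unimodular (s : SL(2, 𝓞 K)) :
    Ideal.span {(botPair K n s.1).1, (botPair K n s.1).2} = ⊤ := by
  rw [Ideal.eq_top_iff_one, Ideal.mem_span_pair]
  have hdet : s.1 0 0 * s.1 1 1 - s.1 0 1 * s.1 1 0 = 1 := by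
    have := s.2
    rwa [Matrix.det_fin_two] at this
  refine ⟨-(Ideal.Quotient.mk n (s.1 0 1)), Ideal.Quotient.mk n (s.1 0 0), ?_⟩
  have h := congrArg (Ideal.Quotient.mk n) hdet
  rw [map_sub, _root_.map_mul, _root_.map_mul, _root_.map_one] at h
  show -(Ideal.Quotient.mk n (s.1 0 1)) * Ideal.Quotient.mk n (s.1 1 0)
      + Ideal.Quotient.mk n (s.1 0 0) * Ideal.Quotient.mk n (s.1 1 1) = 1
  linear_combination h

lemma mem_Gamma1_of_botPair_eq {s h : SL(2, 𝓞 K)}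
    (hb : botPair K n s.1 = botPair K n h.1) : s * h⁻¹ ∈ Gamma1 K n := by
  have h10 : s.1 1 0 - h.1 1 0 ∈ n := by
    rw [← Ideal.Quotient.eq]
    exact congrArg Prod.fst hb
  have h11 : s.1 1 1 - h.1 1 1 ∈ n := by
    rw [← Ideal.Quotient.eq]
    exact congrArg Prod.snd hb
  have hdet : h.1 0 0 * h.1 1 1 - h.1 0 1 * h.1 1 0 = 1 := by
    have := h.2
    rwa [Matrix.det_fin_two] at this
  have hco : (s * h⁻¹).1 = s.1 * (h.1).adjugate := by
    rw [Matrix.SpecialLinearGroup.coe_mul, Matrix.SpecialLinearGroup.coe_inv]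
  constructor
  · show (s * h⁻¹).1 1 0 ∈ n
    rw [hco, Matrix.adjugate_fin_two, Matrix.mul_apply, Fin.sum_univ_two]
    have he : s.1 1 0 * !![h.1 1 1, -h.1 0 1; -h.1 1 0, h.1 0 0] 0 0
        + s.1 1 1 * !![h.1 1 1, -h.1 0 1; -h.1 1 0, h.1 0 0] 1 0
        = (s.1 1 0 - h.1 1 0) * h.1 1 1 - (s.1 1 1 - h.1 1 1) * h.1 1 0 := by
      simp
      ring
    rw [he]
    exact Ideal.sub_mem n (Ideal.mul_mem_right _ n h10) (Ideal.mul_mem_right _ n h11)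
  · show (s * h⁻¹).1 1 1 - 1 ∈ n
    rw [hco, Matrix.adjugate_fin_two, Matrix.mul_apply, Fin.sum_univ_two]
    have he : s.1 1 0 * !![h.1 1 1, -h.1 0 1; -h.1 1 0, h.1 0 0] 0 1
        + s.1 1 1 * !![h.1 1 1, -h.1 0 1; -h.1 1 0, h.1 0 0] 1 1 - 1
        = -((s.1 1 0 - h.1 1 0) * h.1 0 1) + (s.1 1 1 - h.1 1 1) * h.1 0 0
          + (h.1 0 0 * h.1 1 1 - h.1 0 1 * h.1 1 0 - 1) := by
      simp
      ring
    rw [he, hdet, sub_self, add_zero]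
    exact Ideal.add_mem n (neg_mem (Ideal.mul_mem_right _ n h10))
      (Ideal.mul_mem_right _ n h11)

lemma botPair_adj_mul {η : 𝓞 K} {δ : Mat2 (𝓞 K)} (hδ : δ ∈ DeltaEta K n η)
    (s : Mat2 (𝓞 K)) : botPair K n (δ.adjugate * s) = botPair K n s := by
  obtain ⟨hdet, hc, ha⟩ := hδ
  have key : ∀ j, (δ.adjugate * s) 1 j - s 1 j ∈ n := by
    intro j
    rw [Matrix.adjugate_fin_two, Matrix.mul_apply, Fin.sum_univ_two]
    have he : !![δ 1 1, -δ 0 1; -δ 1 0, δ 0 0] 1 0 * s 0 j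
        + !![δ 1 1, -δ 0 1; -δ 1 0, δ 0 0] 1 1 * s 1 j - s 1 j
        = -(δ 1 0 * s 0 j) + (δ 0 0 - 1) * s 1 j := by
      simp
      ring
    rw [he]
    exact Ideal.add_mem n (neg_mem (Ideal.mul_mem_right _ n hc))
      (Ideal.mul_mem_right _ n ha)
  unfold botPair
  ext
  · exact Ideal.Quotient.eq.mpr (key 0)
  · exact Ideal.Quotient.eq.mpr (key 1)

end AuxArith

end Bianchi

namespace Bianchi

section AuxHelp

variable (K : Type) [Field K] [NumberField K]
variable (n : Ideal (𝓞 K))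

lemma smul_cancel {η : 𝓞 K} (hη : η ≠ 0) {A B : Mat2 (𝓞 K)} (h : η • A = η • B) :
    A = B := by
  exact smul_right_injective (Mat2 (𝓞 K)) hη h

lemma mul_adj_10 (A B : Mat2 (𝓞 K)) :
    (A * B.adjugate) 1 0 = A 1 0 * B 1 1 - A 1 1 * B 1 0 := by
  rw [Matrix.adjugate_fin_two, Matrix.mul_apply, Fin.sum_univ_two]
  simp
  try ring

lemma mul_adj_11 (A B : Mat2 (𝓞 K)) :
    (A * B.adjugate) 1 1 = -(A 1 0 * B 0 1) + A 1 1 * B 0 0 := by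
  rw [Matrix.adjugate_fin_two, Matrix.mul_apply, Fin.sum_univ_two]
  simp
  try ring

lemma mul_adj_00 (A B : Mat2 (𝓞 K)) :
    (A * B.adjugate) 0 0 = A 0 0 * B 1 1 - A 0 1 * B 1 0 := by
  rw [Matrix.adjugate_fin_two, Matrix.mul_apply, Fin.sum_univ_two]
  simp
  try ring

lemma botPair_sub_mem {A B : Mat2 (𝓞 K)} (h : botPair K n A = botPair K n B) :
    (A 1 0 - B 1 0 ∈ n) ∧ (A 1 1 - B 1 1 ∈ n) :=
  ⟨Ideal.Quotient.eq.mp (congrArg Prod.fst h), Ideal.Quotient.eq.mp (congrArg Prod.snd h)⟩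

lemma det_sl (s : SL(2, 𝓞 K)) : s.1.det = 1 := s.2

/-- If `h` has the same bottom row as `B` (mod `n`) and `det B = η`,
then `h * adjugate B ∈ Δ_η`. -/
lemma mul_adj_mem_DeltaEta {η : 𝓞 K} {B : Mat2 (𝓞 K)} (h : SL(2, 𝓞 K))
    (hdetB : B.det = η) (hb : botPair K n h.1 = botPair K n B) :
    h.1 * B.adjugate ∈ DeltaEta K n η := by
  obtain ⟨h10, h11⟩ := botPair_sub_mem K n hb
  have hdeth : h.1 0 0 * h.1 1 1 - h.1 0 1 * h.1 1 0 = 1 := by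
    have := h.2
    rwa [Matrix.det_fin_two] at this
  refine ⟨?_, ?_, ?_⟩
  · rw [Matrix.det_mul, Matrix.det_adjugate]
    simp [det_sl, hdetB]
  · rw [mul_adj_10]
    have he : h.1 1 0 * B 1 1 - h.1 1 1 * B 1 0
        = (h.1 1 0 - B 1 0) * B 1 1 - (h.1 1 1 - B 1 1) * B 1 0 := by ring
    rw [he]
    exact Ideal.sub_mem n (Ideal.mul_mem_right _ n h10) (Ideal.mul_mem_right _ n h11)
  · rw [mul_adj_00]
    have he : h.1 0 0 * B 1 1 - h.1 0 1 * B 1 0 - 1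
        = -(h.1 0 0 * (h.1 1 1 - B 1 1)) + h.1 0 1 * (h.1 1 0 - B 1 0)
          + (h.1 0 0 * h.1 1 1 - h.1 0 1 * h.1 1 0 - 1) := by ring
    rw [he, hdeth, sub_self, add_zero]
    exact Ideal.add_mem n (neg_mem (Ideal.mul_mem_left n _ h11))
      (Ideal.mul_mem_left n _ h10)

end AuxHelp

end Bianchi

namespace Bianchi

/-- Hecke action on Manin symbols of level `Γ₁(𝔫)`.
If `∑_M u_M M` is supported on matrices of determinant `η` and satisfies the
condition `(C)`, then for any Manin symbol `[P, (u,v)]` (realized as `[P, g]` for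
`g ∈ SL₂(𝓞)` with bottom row `(u,v) mod 𝔫`),
`T_{Δ_η}([P,(u,v)]) = ∑_M u_M [P(aX+bY, cX+dY), (au+cv, bu+dv)]`, the sum over
those `M = (a b; c d)` whose transformed pair `(au+cv, bu+dv)` lies in `E_𝔫`. -/
theorem hecke_action_manin_symbols_Gamma1
    (K : Type) [Field K] [NumberField K] (hK : IsEuclideanImagQuad K)
    (R : Type) [CommRing R] [Algebra (𝓞 K) R]
    (k : ℕ) (hk : 2 ≤ k)
    (n : Ideal (𝓞 K)) (η : 𝓞 K) (hη : η ≠ 0)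
    (hcop : Ideal.span {η} ⊔ n = ⊤)
    (u : Mat2 (𝓞 K) →₀ R)
    (hsupp : ∀ M ∈ u.support, M.det = η)
    -- condition: for every coset `C ∈ M₂(𝓞)_η/SL₂(𝓞)`,
    -- `∑_{M ∈ C} u_M ([M∞] - [M0]) = [∞] - [0]` in `R[P¹(K)]`
    (hC : ∀ A : Mat2 (𝓞 K), A.det = η →
      ∑ M ∈ u.support.filter (fun M => ∃ s : SL(2, 𝓞 K), M = A * s.1),
        u M • (Finsupp.single (mAct K (ιm K M) (cInf K)) (1 : R)
          - Finsupp.single (mAct K (ιm K M) (c0 K)) (1 : R))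
      = Finsupp.single (cInf K) (1 : R) - Finsupp.single (c0 K) (1 : R))
    (P : Poly R k) (g : SL(2, 𝓞 K))
    (F : Finset (Mat2 (𝓞 K))) (hF : IsRepSys K (Gamma1 K n) (DeltaEta K n η) F)
    -- a section of `Γ₁(𝔫)\SL₂(𝓞) ≅ E_𝔫`, used to realize Manin symbols `[P,(u,v)]`
    (L : (𝓞 K ⧸ n) × (𝓞 K ⧸ n) → SL(2, 𝓞 K))
    (hL : ∀ p : (𝓞 K ⧸ n) × (𝓞 K ⧸ n), Ideal.span {p.1, p.2} = ⊤ → botPair K n (L p).1 = p) :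
    ∑ δ ∈ F, msym K R k (Gamma1 K n)
        (mAct K (ιm K δ) (mAct K (ιm K g.1) (c0 K)))
        (mAct K (ιm K δ) (mAct K (ιm K g.1) (cInf K)))
        (polyAct K R k δ (polyAct K R k g.1 P))
    = ∑ M ∈ u.support.filter (fun M =>
        Ideal.span {(botPair K n (g.1 * M)).1, (botPair K n (g.1 * M)).2} = ⊤),
        u M • maninSymM K R k (Gamma1 K n) (polyAct K R k M.adjugate P)
          (L (botPair K n (g.1 * M))).1 := by
  classical
  have hgdet : g.1.det = 1 := g.2
  have hηK : algebraMap (𝓞 K) K η ≠ 0 := by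
    intro h0
    exact hη (IsFractionRing.injective (𝓞 K) K (by simpa using h0))
  have hdetg' : (ιm K g.1).det ≠ 0 := det_ιm_ne K (by rw [hgdet]; exact one_ne_zero)
  have hgM : ∀ (δ : Mat2 (𝓞 K)) (s : SL(2, 𝓞 K)) (M : Mat2 (𝓞 K)),
      M = (δ * g.1).adjugate * s.1 → g.1 * M = δ.adjugate * s.1 := by
    intro δ s M hM
    rw [hM, Matrix.adjugate_mul_distrib, ← Matrix.mul_assoc, ← Matrix.mul_assoc,
      Matrix.mul_adjugate, hgdet, one_smul, Matrix.one_mul]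
  have hbot : ∀ δ ∈ F, ∀ (s : SL(2, 𝓞 K)) (M : Mat2 (𝓞 K)),
      M = (δ * g.1).adjugate * s.1 → botPair K n (g.1 * M) = botPair K n s.1 := by
    intro δ hδ s M hM
    rw [hgM δ s M hM]
    exact botPair_adj_mul K n (hF.1 hδ) s.1
  -- Step 1 : each summand on the left equals a partial sum of the right-hand side
  have key : ∀ δ ∈ F,
      msym K R k (Gamma1 K n)
        (mAct K (ιm K δ) (mAct K (ιm K g.1) (c0 K)))
        (mAct K (ιm K δ) (mAct K (ιm K g.1) (cInf K)))
        (polyAct K R k δ (polyAct K R k g.1 P))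
      = ∑ M ∈ u.support.filter (fun M => ∃ s : SL(2, 𝓞 K), M = (δ * g.1).adjugate * s.1),
          u M • maninSymM K R k (Gamma1 K n) (polyAct K R k M.adjugate P)
            (L (botPair K n (g.1 * M))).1 := by
    intro δ hδF
    have hδΔ : δ ∈ DeltaEta K n η := hF.1 hδF
    have hδdet : δ.det = η := hδΔ.1
    have hδg : (δ * g.1).det = η := by rw [Matrix.det_mul, hδdet, hgdet, mul_one]
    have hAdet : ((δ * g.1).adjugate).det = η := by
      rw [Matrix.det_adjugate]
      simp [hδg]
    have hdetδ' : (ιm K δ).det ≠ 0 := det_ιm_ne K (by rw [hδdet]; exact hη)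
    have hdetδg' : (ιm K (δ * g.1)).det ≠ 0 := det_ιm_ne K (by rw [hδg]; exact hη)
    set Φ : (P1 K →₀ R) →ₗ[R] MS K R k (Gamma1 K n) :=
      Finsupp.lsum R (fun x : P1 K => LinearMap.toSpanSingleton R (MS K R k (Gamma1 K n))
        (msym K R k (Gamma1 K n) (c0 K) (mAct K (ιm K (δ * g.1)) x)
          (polyAct K R k δ (polyAct K R k g.1 P)))) with hΦdef
    have hΦs : ∀ (x : P1 K) (r : R), Φ (Finsupp.single x r)
        = r • msym K R k (Gamma1 K n) (c0 K) (mAct K (ιm K (δ * g.1)) x)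
            (polyAct K R k δ (polyAct K R k g.1 P)) := by
      intro x r
      rw [hΦdef, Finsupp.lsum_single, LinearMap.toSpanSingleton_apply]
    have happ := DFunLike.congr_arg Φ (hC (δ * g.1).adjugate hAdet)
    rw [map_sum, _root_.map_sub, hΦs, hΦs, one_smul, one_smul] at happ
    have hcomp : ∀ x : P1 K,
        mAct K (ιm K δ) (mAct K (ιm K g.1) x) = mAct K (ιm K (δ * g.1)) x := by
      intro x
      rw [ιm_mul, mAct_mAct K hdetδ' hdetg']
    rw [hcomp, hcomp, msym_sub K R k (Gamma1 K n) (c0 K)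
      (mAct K (ιm K (δ * g.1)) (c0 K)) (mAct K (ιm K (δ * g.1)) (cInf K))
      (polyAct K R k δ (polyAct K R k g.1 P)), ← happ]
    refine Finset.sum_congr rfl ?_
    intro M hM
    obtain ⟨hMsupp, s, hMs⟩ := Finset.mem_filter.mp hM
    have hMdet : M.det = η := hsupp M hMsupp
    have hdets' : (ιm K s.1).det ≠ 0 := det_ιm_ne K (by rw [det_sl]; exact one_ne_zero)
    have hdetM' : (ιm K M).det ≠ 0 := det_ιm_ne K (by rw [hMdet]; exact hη)
    have hprod : (δ * g.1) * M = η • s.1 := by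
      rw [hMs, ← Matrix.mul_assoc, Matrix.mul_adjugate, hδg, Matrix.smul_mul, Matrix.one_mul]
    have hpt : ∀ x : P1 K, mAct K (ιm K (δ * g.1)) (mAct K (ιm K M) x)
        = mAct K (ιm K s.1) x := by
      intro x
      rw [mAct_mAct K hdetδg' hdetM', ← ιm_mul, hprod, ιm_smul,
        mAct_smul K _ hηK hdets']
    have hbp : botPair K n (g.1 * M) = botPair K n s.1 := hbot δ hδF s M hMs
    have hspan : Ideal.span {(botPair K n (g.1 * M)).1, (botPair K n (g.1 * M)).2} = ⊤ := by
      rw [hbp]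
      exact botPair_unimodular K n s
    have hLb : botPair K n (L (botPair K n (g.1 * M))).1 = botPair K n (g.1 * M) :=
      hL _ hspan
    set hh : SL(2, 𝓞 K) := L (botPair K n (g.1 * M)) with hhdef
    have hγ : s * hh⁻¹ ∈ Gamma1 K n :=
      mem_Gamma1_of_botPair_eq K n ((hLb.trans hbp).symm)
    have hcoe : (s * hh⁻¹).1 * hh.1 = s.1 := by
      have hgrp : (s * hh⁻¹) * hh = s := by group
      calc (s * hh⁻¹).1 * hh.1 = ((s * hh⁻¹) * hh).1 := rfl
        _ = s.1 := by rw [hgrp]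
    have hsadj : s.1 * M.adjugate = δ * g.1 := by
      rw [hMs, Matrix.adjugate_mul_distrib, adj2, ← Matrix.mul_assoc,
        Matrix.mul_adjugate, det_sl, one_smul, Matrix.one_mul]
    have hdethh' : (ιm K hh.1).det ≠ 0 := det_ιm_ne K (by rw [det_sl]; exact one_ne_zero)
    have hdetγ' : (ιm K (s * hh⁻¹).1).det ≠ 0 :=
      det_ιm_ne K (by rw [det_sl]; exact one_ne_zero)
    have hact : ∀ x : P1 K, mAct K (ιm K (s * hh⁻¹).1) (mAct K (ιm K hh.1) x)
        = mAct K (ιm K s.1) x := by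
      intro x
      rw [mAct_mAct K hdetγ' hdethh', ← ιm_mul, hcoe]
    have hpoly : polyAct K R k (s * hh⁻¹).1
        (polyAct K R k hh.1 (polyAct K R k M.adjugate P))
        = polyAct K R k δ (polyAct K R k g.1 P) := by
      rw [polyAct_polyAct K R k hk, hcoe, polyAct_polyAct K R k hk, hsadj,
        ← polyAct_polyAct K R k hk]
    have hmanin : maninSymM K R k (Gamma1 K n) (polyAct K R k M.adjugate P) hh.1
        = msym K R k (Gamma1 K n) (mAct K (ιm K s.1) (c0 K)) (mAct K (ιm K s.1) (cInf K))
            (polyAct K R k δ (polyAct K R k g.1 P)) := by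
      rw [maninSymM]
      rw [← msym_rel K R k (Gamma1 K n) hγ (mAct K (ιm K hh.1) (c0 K))
        (mAct K (ιm K hh.1) (cInf K)) (polyAct K R k hh.1 (polyAct K R k M.adjugate P))]
      rw [hact, hact, hpoly]
    rw [_root_.map_smul, _root_.map_sub, hΦs, hΦs, one_smul, one_smul, hpt, hpt,
      ← msym_sub K R k (Gamma1 K n) (c0 K) (mAct K (ιm K s.1) (c0 K))
        (mAct K (ιm K s.1) (cInf K)) (polyAct K R k δ (polyAct K R k g.1 P)), hmanin]
  -- Step 2 : reindex the double sum
  have huniq : ∀ δ₁ ∈ F, ∀ δ₂ ∈ F, ∀ M : Mat2 (𝓞 K),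
      (∃ s : SL(2, 𝓞 K), M = (δ₁ * g.1).adjugate * s.1) →
      (∃ s : SL(2, 𝓞 K), M = (δ₂ * g.1).adjugate * s.1) → δ₁ = δ₂ := by
    intro δ₁ h₁ δ₂ h₂ M he₁ he₂
    obtain ⟨s₁, e₁⟩ := he₁
    obtain ⟨s₂, e₂⟩ := he₂
    have hδ₁Δ : δ₁ ∈ DeltaEta K n η := hF.1 h₁
    have hδ₂Δ : δ₂ ∈ DeltaEta K n η := hF.1 h₂
    have h22 : (δ₂ * g.1).det = η := by rw [Matrix.det_mul, hδ₂Δ.1, hgdet, mul_one]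
    have eA : (δ₂ * g.1) * M = η • s₂.1 := by
      rw [e₂, ← Matrix.mul_assoc, Matrix.mul_adjugate, h22, Matrix.smul_mul, Matrix.one_mul]
    have eB : (δ₂ * g.1) * M = δ₂ * (δ₁.adjugate * s₁.1) := by
      rw [Matrix.mul_assoc, hgM δ₁ s₁ M e₁]
    have e3 : δ₂ * (δ₁.adjugate * s₁.1) = η • s₂.1 := by rw [← eB, eA]
    have coem : (s₂ * s₁⁻¹).1 = s₂.1 * s₁.1.adjugate := by
      rw [Matrix.SpecialLinearGroup.coe_mul, Matrix.SpecialLinearGroup.coe_inv]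
    have eC : δ₂ * δ₁.adjugate = η • (s₂ * s₁⁻¹).1 := by
      rw [coem]
      calc δ₂ * δ₁.adjugate
          = δ₂ * δ₁.adjugate * (s₁.1 * s₁.1.adjugate) := by
            rw [Matrix.mul_adjugate, det_sl, one_smul, Matrix.mul_one]
        _ = (δ₂ * (δ₁.adjugate * s₁.1)) * s₁.1.adjugate := by
            simp only [Matrix.mul_assoc]
        _ = (η • s₂.1) * s₁.1.adjugate := by rw [e3]
        _ = η • (s₂.1 * s₁.1.adjugate) := by rw [Matrix.smul_mul]
    have hδeq : δ₂ = (s₂ * s₁⁻¹).1 * δ₁ := by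
      apply smul_cancel K hη
      calc η • δ₂ = δ₂ * (η • (1 : Mat2 (𝓞 K))) := by
            rw [Matrix.mul_smul, Matrix.mul_one]
        _ = δ₂ * (δ₁.adjugate * δ₁) := by rw [Matrix.adjugate_mul, hδ₁Δ.1]
        _ = (δ₂ * δ₁.adjugate) * δ₁ := by rw [Matrix.mul_assoc]
        _ = (η • (s₂ * s₁⁻¹).1) * δ₁ := by rw [eC]
        _ = η • ((s₂ * s₁⁻¹).1 * δ₁) := by rw [Matrix.smul_mul]
    have e10 := congrFun (congrFun eC 1) 0
    rw [mul_adj_10 K] at e10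
    have e11 := congrFun (congrFun eC 1) 1
    rw [mul_adj_11 K] at e11
    rw [Matrix.smul_apply, smul_eq_mul] at e10 e11
    have hx10 : (s₂ * s₁⁻¹).1 1 0 ∈ n := by
      apply eta_cancel K n hcop
      rw [← e10]
      exact Ideal.sub_mem n (Ideal.mul_mem_right _ n hδ₂Δ.2.1)
        (Ideal.mul_mem_left n _ hδ₁Δ.2.1)
    have hx11 : (s₂ * s₁⁻¹).1 1 1 - 1 ∈ n := by
      apply eta_cancel K n hcop
      have heq : η * ((s₂ * s₁⁻¹).1 1 1 - 1)
          = -(δ₂ 1 0 * δ₁ 0 1) + ((δ₂ 1 1 - η) * δ₁ 0 0 + η * (δ₁ 0 0 - 1)) := by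
        linear_combination -e11
      rw [heq]
      exact Ideal.add_mem n (neg_mem (Ideal.mul_mem_right _ n hδ₂Δ.2.1))
        (Ideal.add_mem n (Ideal.mul_mem_right _ n (delta_d K n hδ₂Δ))
          (Ideal.mul_mem_left n _ hδ₁Δ.2.2))
    have hxΓ : s₂ * s₁⁻¹ ∈ Gamma1 K n := ⟨hx10, hx11⟩
    obtain ⟨w, hw, hwu⟩ := hF.2 δ₁ hδ₁Δ
    have hδ₁w : δ₁ = w := hwu δ₁ ⟨h₁, 1, (Gamma1 K n).one_mem, by
      rw [Matrix.SpecialLinearGroup.coe_one, Matrix.one_mul]⟩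
    have hδ₂w : δ₂ = w := hwu δ₂ ⟨h₂, (s₂ * s₁⁻¹)⁻¹, (Gamma1 K n).inv_mem hxΓ, by
      rw [hδeq, ← Matrix.mul_assoc, ← Matrix.SpecialLinearGroup.coe_mul,
        inv_mul_cancel, Matrix.SpecialLinearGroup.coe_one, Matrix.one_mul]⟩
    rw [hδ₁w, hδ₂w]
  have hdisj : (↑F : Set (Mat2 (𝓞 K))).PairwiseDisjoint
      (fun δ => u.support.filter
        (fun M => ∃ s : SL(2, 𝓞 K), M = (δ * g.1).adjugate * s.1)) := by
    intro δ₁ h₁ δ₂ h₂ hne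
    refine Finset.disjoint_left.mpr ?_
    intro M hM1 hM2
    exact hne (huniq δ₁ h₁ δ₂ h₂ M (Finset.mem_filter.mp hM1).2 (Finset.mem_filter.mp hM2).2)
  have hcover : F.biUnion (fun δ => u.support.filter
        (fun M => ∃ s : SL(2, 𝓞 K), M = (δ * g.1).adjugate * s.1))
      = u.support.filter (fun M =>
          Ideal.span {(botPair K n (g.1 * M)).1, (botPair K n (g.1 * M)).2} = ⊤) := by
    apply Finset.Subset.antisymm
    · intro M hM
      rw [Finset.mem_biUnion] at hM
      obtain ⟨δ, hδF, hMf⟩ := hM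
      obtain ⟨hMs, s, e⟩ := Finset.mem_filter.mp hMf
      refine Finset.mem_filter.mpr ⟨hMs, ?_⟩
      rw [hbot δ hδF s M e]
      exact botPair_unimodular K n s
    · intro M hM
      obtain ⟨hMs, hspan⟩ := Finset.mem_filter.mp hM
      have hMdet : M.det = η := hsupp M hMs
      have hgMdet : (g.1 * M).det = η := by rw [Matrix.det_mul, hgdet, hMdet, one_mul]
      have hLb : botPair K n (L (botPair K n (g.1 * M))).1 = botPair K n (g.1 * M) :=
        hL _ hspan
      have hδ₀ : (L (botPair K n (g.1 * M))).1 * (g.1 * M).adjugate ∈ DeltaEta K n η :=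
        mul_adj_mem_DeltaEta K n _ hgMdet hLb
      obtain ⟨δ, ⟨hδF, γ, hγΓ, hγe⟩, -⟩ := hF.2 _ hδ₀
      rw [Finset.mem_biUnion]
      refine ⟨δ, hδF, Finset.mem_filter.mpr ⟨hMs, γ⁻¹ * L (botPair K n (g.1 * M)), ?_⟩⟩
      have hcoem : (γ⁻¹ * L (botPair K n (g.1 * M))).1
          = γ.1.adjugate * (L (botPair K n (g.1 * M))).1 := by
        rw [Matrix.SpecialLinearGroup.coe_mul, Matrix.SpecialLinearGroup.coe_inv]
      have h1 : (γ.1 * δ).adjugate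
          = (g.1 * M) * (L (botPair K n (g.1 * M))).1.adjugate := by
        rw [← hγe, Matrix.adjugate_mul_distrib, adj2]
      have hLL : (L (botPair K n (g.1 * M))).1.adjugate * (L (botPair K n (g.1 * M))).1
          = (1 : Mat2 (𝓞 K)) := by
        rw [Matrix.adjugate_mul, det_sl, one_smul]
      have hgg : g.1.adjugate * g.1 = (1 : Mat2 (𝓞 K)) := by
        rw [Matrix.adjugate_mul, hgdet, one_smul]
      have h2 : δ.adjugate * γ.1.adjugate
          = (g.1 * M) * (L (botPair K n (g.1 * M))).1.adjugate := by
        rw [← Matrix.adjugate_mul_distrib, h1]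
      calc M = g.1.adjugate * (g.1 * M) := by
            rw [← Matrix.mul_assoc, hgg, Matrix.one_mul]
        _ = g.1.adjugate * ((g.1 * M) * ((L (botPair K n (g.1 * M))).1.adjugate
              * (L (botPair K n (g.1 * M))).1)) := by
            rw [hLL, Matrix.mul_one]
        _ = g.1.adjugate * (((g.1 * M) * (L (botPair K n (g.1 * M))).1.adjugate)
              * (L (botPair K n (g.1 * M))).1) := by
            rw [← Matrix.mul_assoc (g.1 * M)]
        _ = g.1.adjugate * ((δ.adjugate * γ.1.adjugate) * (L (botPair K n (g.1 * M))).1) := by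
            rw [h2]
        _ = (δ * g.1).adjugate * (γ⁻¹ * L (botPair K n (g.1 * M))).1 := by
            rw [hcoem, Matrix.adjugate_mul_distrib]
            simp only [Matrix.mul_assoc]
  rw [← hcover, Finset.sum_biUnion hdisj]
  exact Finset.sum_congr rfl key

end Bianchi
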